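/- Let n ≥ 1, let w₁, ..., w_n > 0 be real weights, and let U₁, ..., U_n be independent random variables, each uniformly distributed on (0, 1). Then for every index j ∈ {1, ..., n}, the probability that U_j^{1/w_j} > U_i^{1/w_i} for all i ≠ j (equivalently, that −log(U_j)/w_j < −log(U_i)/w_i for all i ≠ j) equals w_j / (w₁ + w₂ + ⋯ + w_n). -/

import Mathlib

open MeasureTheory ProbabilityTheory Finset

/-- Correctness of weighted reservoir sampling: if `U 1, ..., U n` are
independent `Uniform(0,1)` random variables and `w 1, ..., w n > 0` are weights, then for
each `j` the probability that the key `U j ^ (1 / w j)` strictly beats every other key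
`U i ^ (1 / w i)` equals `w j / (w 1 + ⋯ + w n)`. -/
theorem reservoir_sampling_correct
    {Ω : Type*} [MeasurableSpace Ω] (μ : Measure Ω) [IsProbabilityMeasure μ]
    (n : ℕ) (hn : 1 ≤ n) (w : Fin n → ℝ) (hw : ∀ i, 0 < w i)
    (U : Fin n → Ω → ℝ)
    (hmeas : ∀ i, Measurable (U i))
    (hindep : iIndepFun U μ)
    (hunif : ∀ i, Measure.map (U i) μ = volume.restrict (Set.Ioo (0 : ℝ) 1))
    (j : Fin n) :
    μ {ω | ∀ i, i ≠ j → Real.rpow (U i ω) (1 / w i) < Real.rpow (U j ω) (1 / w j)}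
      = ENNReal.ofReal (w j / ∑ i, w i) := by
  obtain ⟨m, rfl⟩ : ∃ m, n = m + 1 := ⟨n - 1, (Nat.succ_pred_eq_of_pos hn).symm⟩
  set ν : Measure ℝ := volume.restrict (Set.Ioo (0 : ℝ) 1) with hν
  have hexp : ∀ i : Fin (m + 1), (0:ℝ) ≤ 1 / w i := fun i => (one_div_pos.mpr (hw i)).le
  -- the joint law is the product of uniforms
  have hU : Measurable fun ω (i : Fin (m + 1)) => U i ω :=
    measurable_pi_lambda _ hmeas
  have hmap : Measure.map (fun ω i => U i ω) μ = Measure.pi (fun _ : Fin (m + 1) => ν) := by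
    refine (Measure.pi_eq fun s hs => ?_).symm
    rw [Measure.map_apply hU (MeasurableSet.univ_pi hs)]
    have hset : (fun ω i => U i ω) ⁻¹' Set.pi Set.univ s
        = ⋂ i ∈ Finset.univ, U i ⁻¹' s i := by
      ext ω; simp [Set.mem_pi]
    rw [hset, hindep.measure_inter_preimage_eq_mul Finset.univ (fun i _ => hs i)]
    refine Finset.prod_congr rfl fun i _ => ?_
    rw [← hunif i, Measure.map_apply (hmeas i) (hs i)]
  -- the target event as a set in the product space
  set S : Set (Fin (m + 1) → ℝ) :=
    {x | ∀ i, i ≠ j → (x i) ^ (1 / w i) < (x j) ^ (1 / w j)} with hS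
  have hSm : MeasurableSet S := by
    have : S = ⋂ i, ⋂ _ : i ≠ j,
        {x : Fin (m + 1) → ℝ | (x i) ^ (1 / w i) < (x j) ^ (1 / w j)} := by
      ext x; simp [hS]
    rw [this]
    refine MeasurableSet.iInter fun i => MeasurableSet.iInter fun _ => ?_
    exact measurableSet_lt
      (((Real.continuous_rpow_const (hexp i)).measurable).comp (measurable_pi_apply i))
      (((Real.continuous_rpow_const (hexp j)).measurable).comp (measurable_pi_apply j))
  have hev : μ {ω | ∀ i, i ≠ j → Real.rpow (U i ω) (1 / w i) < Real.rpow (U j ω) (1 / w j)}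
      = (Measure.pi (fun _ : Fin (m + 1) => ν)) S := by
    rw [← hmap, Measure.map_apply hU hSm]
    rfl
  rw [hev]
  -- split off coordinate j
  set T : Set (ℝ × (Fin m → ℝ)) :=
    {p | ∀ k, (p.2 k) ^ (1 / w (j.succAbove k)) < p.1 ^ (1 / w j)} with hT
  have hTm : MeasurableSet T := by
    have : T = ⋂ k, {p : ℝ × (Fin m → ℝ) |
        (p.2 k) ^ (1 / w (j.succAbove k)) < p.1 ^ (1 / w j)} := by
      ext p; simp [hT]
    rw [this]
    refine MeasurableSet.iInter fun k => ?_
    exact measurableSet_lt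
      (((Real.continuous_rpow_const (hexp _)).measurable).comp
        ((measurable_pi_apply k).comp measurable_snd))
      (((Real.continuous_rpow_const (hexp j)).measurable).comp measurable_fst)
  have hpre : (MeasurableEquiv.piFinSuccAbove (fun _ : Fin (m + 1) => ℝ) j) ⁻¹' T = S := by
    ext x
    simp only [hT, hS, Set.mem_preimage, Set.mem_setOf_eq,
      MeasurableEquiv.piFinSuccAbove_apply, Fin.insertNthEquiv, Equiv.coe_fn_symm_mk,
      Fin.removeNth]
    constructor
    · intro h i hij
      obtain ⟨k, rfl⟩ := Fin.exists_succAbove_eq hij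
      exact h k
    · intro h k
      exact h _ (j.succAbove_ne k)
  have hsplit : (Measure.pi (fun _ : Fin (m + 1) => ν)) S
      = (ν.prod (Measure.pi fun _ : Fin m => ν)) T := by
    rw [← hpre]
    exact ((measurePreserving_piFinSuccAbove (fun _ : Fin (m + 1) => ν) j).measure_preimage
      hTm.nullMeasurableSet)
  rw [hsplit, Measure.prod_apply hTm]
  -- the section measure for t ∈ (0,1)
  set s : ℝ := ∑ k : Fin m, w (j.succAbove k) with hs
  have hs0 : 0 ≤ s := Finset.sum_nonneg fun k _ => (hw _).le
  set p : ℝ := s / w j with hp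
  have hp0 : 0 ≤ p := div_nonneg hs0 (hw j).le
  have hsec : ∀ t ∈ Set.Ioo (0 : ℝ) 1,
      (Measure.pi fun _ : Fin m => ν) (Prod.mk t ⁻¹' T) = ENNReal.ofReal (t ^ p) := by
    intro t ht
    have htpos : 0 < t := ht.1
    have hsec' : Prod.mk t ⁻¹' T
        = Set.pi Set.univ fun k : Fin m =>
            {x : ℝ | x ^ (1 / w (j.succAbove k)) < t ^ (1 / w j)} := by
      ext y; simp [hT, Set.mem_pi]
    rw [hsec', Measure.pi_pi]
    have hone : ∀ k : Fin m,
        ν {x : ℝ | x ^ (1 / w (j.succAbove k)) < t ^ (1 / w j)}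
          = ENNReal.ofReal (t ^ (w (j.succAbove k) / w j)) := by
      intro k
      set c : ℝ := t ^ (w (j.succAbove k) / w j) with hc
      have hcpos : 0 < c := Real.rpow_pos_of_pos htpos _
      have hc1 : c < 1 :=
        Real.rpow_lt_one htpos.le ht.2 (div_pos (hw _) (hw j))
      have hcb : c ^ (1 / w (j.succAbove k)) = t ^ (1 / w j) := by
        rw [hc, ← Real.rpow_mul htpos.le]
        congr 1
        rw [div_mul_div_comm, mul_one, mul_comm (w j), ← div_div, div_self (hw _).ne']
      have hinter :
          {x : ℝ | x ^ (1 / w (j.succAbove k)) < t ^ (1 / w j)}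
            ∩ Set.Ioo (0 : ℝ) 1 = Set.Ioo 0 c := by
        ext x
        simp only [Set.mem_inter_iff, Set.mem_Ioo, Set.mem_setOf_eq]
        constructor
        · rintro ⟨hlt, hx0, hx1⟩
          refine ⟨hx0, ?_⟩
          rw [← hcb] at hlt
          exact (Real.rpow_lt_rpow_iff hx0.le hcpos.le
            (one_div_pos.mpr (hw (j.succAbove k)))).mp hlt
        · rintro ⟨hx0, hxc⟩
          refine ⟨?_, hx0, hxc.trans hc1⟩
          rw [← hcb]
          exact (Real.rpow_lt_rpow_iff hx0.le hcpos.le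
            (one_div_pos.mpr (hw (j.succAbove k)))).mpr hxc
      have hmeasset : MeasurableSet
          {x : ℝ | x ^ (1 / w (j.succAbove k)) < t ^ (1 / w j)} :=
        measurableSet_lt (Real.continuous_rpow_const (hexp _)).measurable measurable_const
      rw [hν, Measure.restrict_apply hmeasset, hinter, Real.volume_Ioo, sub_zero]
    rw [Finset.prod_congr rfl fun k _ => hone k, ← ENNReal.ofReal_prod_of_nonneg
      (fun k _ => Real.rpow_nonneg htpos.le _)]
    congr 1
    rw [← Real.rpow_sum_of_pos htpos, hp, hs, Finset.sum_div]
  -- compute the integral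
  have hint : ∫⁻ t, (Measure.pi fun _ : Fin m => ν) (Prod.mk t ⁻¹' T) ∂ν
      = ENNReal.ofReal (1 / (p + 1)) := by
    rw [hν, setLIntegral_congr_fun measurableSet_Ioo hsec]
    have hi : IntegrableOn (fun t : ℝ => t ^ p) (Set.Ioo 0 1) volume := by
      have := (intervalIntegral.intervalIntegrable_rpow' (a := 0) (b := 1)
        (by linarith : (-1:ℝ) < p))
      rw [intervalIntegrable_iff_integrableOn_Ioc_of_le (by norm_num)] at this
      exact this.mono_set Set.Ioo_subset_Ioc_self
    rw [← ofReal_integral_eq_lintegral_ofReal hi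
      (ae_restrict_of_forall_mem measurableSet_Ioo fun t ht => Real.rpow_nonneg ht.1.le _)]
    congr 1
    rw [← integral_Ioc_eq_integral_Ioo,
      ← intervalIntegral.integral_of_le (by norm_num : (0:ℝ) ≤ 1),
      integral_rpow (Or.inl (by linarith : (-1:ℝ) < p)),
      Real.one_rpow, Real.zero_rpow (by linarith : p + 1 ≠ 0)]
    ring
  rw [hint]
  congr 1
  have hsum : ∑ i, w i = w j + s := by
    rw [hs]
    exact Fin.sum_univ_succAbove w j
  have hwj := hw j
  have h1 : p + 1 = (w j + s) / w j := by
    rw [hp]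
    field_simp
    ring
  rw [hsum, h1, one_div_div]
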